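/- For every p ≥ 1, the family of sets D(Y), where Y ranges over the unitary Stratinos of length p, is pairwise disjoint and its union is DNJ(p); equivalently, every element of DNJ(p) belongs to D(Y) for exactly one unitary Stratino Y of length p. -/

import Mathlib

/-- `NJ` : the alphabet `{1, 1#, 2, 2#, 3, …}` encoded as `ℕ+ × Bool` with the
lexicographic order: `(n, false)` encodes `n` and `(n, true)` encodes `n#`. -/
abbrev NJ := Lex (ℕ+ × Bool)

/-- A Stratino is *unitary* if it is nonempty and its last term is `1`. -/
def Unitary (X : List NJ) : Prop :=
  X ≠ [] ∧ X.getLast? = some (toLex (1, false))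

/-- For a unitary Stratino `Y = X ++ [1]`, the set
`D(Y) = {(X,n) | n ≥ 2} ∪ {(X,n#) | n ≥ 1} ∪ {(X,n,1) | n ≥ 1} ∪ {(X,n#,1) | n ≥ 1}`. -/
def DSetOf (Y : List NJ) : Set (List NJ) :=
  {Z | (∃ n : ℕ+, 2 ≤ n ∧ Z = Y.dropLast ++ [toLex (n, false)]) ∨
       (∃ n : ℕ+, Z = Y.dropLast ++ [toLex (n, true)]) ∨
       (∃ n : ℕ+, Z = Y.dropLast ++ [toLex (n, false), toLex (1, false)]) ∨
       (∃ n : ℕ+, Z = Y.dropLast ++ [toLex (n, true), toLex (1, false)])}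

/-- `DNJ p` : the set of non-unitary Stratinos of length `p` together with the unitary
Stratinos of length `p + 1`. -/
def DNJ (p : ℕ) : Set (List NJ) :=
  {Z | (Z.length = p ∧ ¬ Unitary Z) ∨ (Z.length = p + 1 ∧ Unitary Z)}


lemma unitary_concat_iff (X : List NJ) (a : NJ) :
    Unitary (X ++ [a]) ↔ a = toLex (1, false) := by
  simp [Unitary]

lemma unitary_eq {Y : List NJ} (h : Unitary Y) :
    Y = Y.dropLast ++ [toLex (1, false)] := by
  obtain ⟨hne, hl⟩ := h
  conv_lhs => rw [← List.dropLast_append_getLast hne]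
  rw [List.getLast?_eq_getLast hne] at hl
  simp at hl
  rw [hl]

lemma dropLast_det {Y Z : List NJ} {p : ℕ} (hY : Unitary Y) (hlen : Y.length = p)
    (hZ : Z ∈ DSetOf Y) :
    Y = (if Z.length = p then Z.dropLast else Z.dropLast.dropLast)
        ++ [toLex (1, false)] := by
  have hp1 : 1 ≤ p := by
    rcases Y with _ | ⟨a, t⟩
    · exact absurd rfl hY.1
    · simp at hlen; omega
  have hd : Y.dropLast.length = p - 1 := by
    rw [List.length_dropLast, hlen]
  rcases hZ with ⟨n, hn, rfl⟩ | ⟨n, rfl⟩ | ⟨n, rfl⟩ | ⟨n, rfl⟩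
  · rw [if_pos (by simp [hd]; omega), List.dropLast_concat]
    exact unitary_eq hY
  · rw [if_pos (by simp [hd]; omega), List.dropLast_concat]
    exact unitary_eq hY
  · rw [if_neg (by simp [hd]; omega)]
    rw [show Y.dropLast ++ [toLex (n, false), toLex (1, false)]
        = (Y.dropLast ++ [toLex (n, false)]) ++ [toLex (1, false)] by simp,
      List.dropLast_concat, List.dropLast_concat]
    exact unitary_eq hY
  · rw [if_neg (by simp [hd]; omega)]
    rw [show Y.dropLast ++ [toLex (n, true), toLex (1, false)]
        = (Y.dropLast ++ [toLex (n, true)]) ++ [toLex (1, false)] by simp,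
      List.dropLast_concat, List.dropLast_concat]
    exact unitary_eq hY

/-- For `p ≥ 1`, the sets `D(Y)`, for `Y` ranging over the unitary Stratinos of
length `p`, form a partition of `DNJ p`: each is contained in `DNJ p`, and every element
of `DNJ p` lies in `D(Y)` for exactly one such `Y`. -/
theorem DSet_partition (p : ℕ) (hp : 1 ≤ p) :
    (∀ Y : List NJ, Unitary Y → Y.length = p → DSetOf Y ⊆ DNJ p) ∧
    (∀ Z ∈ DNJ p, ∃! Y : List NJ, Unitary Y ∧ Y.length = p ∧ Z ∈ DSetOf Y) := by
  constructor
  · rintro Y hY hlen Z hZ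
    have hd : Y.dropLast.length = p - 1 := by
      rw [List.length_dropLast, hlen]
    rcases hZ with ⟨n, hn, rfl⟩ | ⟨n, rfl⟩ | ⟨n, rfl⟩ | ⟨n, rfl⟩
    · left
      refine ⟨by simp [hd]; omega, ?_⟩
      rw [unitary_concat_iff]
      intro h
      have : n = 1 := by
        simpa [Prod.ext_iff] using h
      simp [this] at hn
    · left
      refine ⟨by simp [hd]; omega, ?_⟩
      rw [unitary_concat_iff]
      intro h
      simp [Prod.ext_iff] at h
    · right
      refine ⟨by simp [hd]; omega, ?_⟩
      rw [show Y.dropLast ++ [toLex (n, false), toLex (1, false)]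
          = (Y.dropLast ++ [toLex (n, false)]) ++ [toLex (1, false)] by simp,
        unitary_concat_iff]
    · right
      refine ⟨by simp [hd]; omega, ?_⟩
      rw [show Y.dropLast ++ [toLex (n, true), toLex (1, false)]
          = (Y.dropLast ++ [toLex (n, true)]) ++ [toLex (1, false)] by simp,
        unitary_concat_iff]
  · rintro Z (⟨hlen, hun⟩ | ⟨hlen, hun⟩)
    · -- Z has length p and is not unitary
      have hne : Z ≠ [] := by
        intro h; rw [h] at hlen; simp at hlen; omega
      set a := Z.getLast hne with ha
      have hZ : Z = Z.dropLast ++ [a] := (List.dropLast_append_getLast hne).symm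
      have hd : Z.dropLast.length = p - 1 := by
        rw [List.length_dropLast, hlen]
      have hun' : a ≠ toLex (1, false) := by
        intro h
        apply hun
        rw [hZ, h]
        exact (unitary_concat_iff _ _).mpr rfl
      refine ⟨Z.dropLast ++ [toLex (1, false)], ⟨(unitary_concat_iff _ _).mpr rfl,
        by simp [hd]; omega, ?_⟩, ?_⟩
      · simp only [DSetOf, Set.mem_setOf_eq, List.dropLast_concat]
        obtain ⟨n, b, hab⟩ : ∃ n b, a = toLex (n, b) := ⟨(ofLex a).1, (ofLex a).2, rfl⟩
        rw [hab] at hZ hun'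
        cases b with
        | false =>
          left
          refine ⟨n, ?_, hZ⟩
          have hn1 : n ≠ 1 := by
            intro h; rw [h] at hun'; exact hun' rfl
          exact lt_of_le_of_ne n.one_le (Ne.symm hn1)
        | true => exact Or.inr (Or.inl ⟨n, hZ⟩)
      · rintro Y' ⟨h1, h2, h3⟩
        have := dropLast_det h1 h2 h3
        rw [if_pos hlen] at this
        exact this
    · -- Z has length p+1 and is unitary
      have hne : Z ≠ [] := by
        intro h; rw [h] at hlen; simp at hlen
      have hZ1 : Z = Z.dropLast ++ [toLex (1, false)] := unitary_eq hun
      have hdne : Z.dropLast ≠ [] := by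
        intro h
        have : Z.dropLast.length = p := by rw [List.length_dropLast, hlen]; omega
        rw [h] at this; simp at this; omega
      set a := Z.dropLast.getLast hdne with ha
      have hZ2 : Z.dropLast = Z.dropLast.dropLast ++ [a] :=
        (List.dropLast_append_getLast hdne).symm
      have hdd : Z.dropLast.dropLast.length = p - 1 := by
        rw [List.length_dropLast, List.length_dropLast, hlen]
        omega
      refine ⟨Z.dropLast.dropLast ++ [toLex (1, false)], ⟨(unitary_concat_iff _ _).mpr rfl,
        by simp [hdd]; omega, ?_⟩, ?_⟩
      · simp only [DSetOf, Set.mem_setOf_eq, List.dropLast_concat]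
        have hZ3 : Z = Z.dropLast.dropLast ++ [a, toLex (1, false)] := by
          rw [hZ1, hZ2]; simp
        obtain ⟨n, b, hab⟩ : ∃ n b, a = toLex (n, b) := ⟨(ofLex a).1, (ofLex a).2, rfl⟩
        rw [hab] at hZ3
        cases b with
        | false => exact Or.inr (Or.inr (Or.inl ⟨n, hZ3⟩))
        | true => exact Or.inr (Or.inr (Or.inr ⟨n, hZ3⟩))
      · rintro Y' ⟨h1, h2, h3⟩
        have := dropLast_det h1 h2 h3
        rw [if_neg (by omega)] at this
        exact this
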